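/- Let x^1, ..., x^s be real numbers and let X = (x^1, ..., x^s) ∈ ℝ^s. For every η_0 > 0 there exist finitely many rational vectors X_1, ..., X_N ∈ ℚ^s, each of the form (p^1/q, ..., p^s/q) with |q x^j - p^j| < η_0 for all j, such that X lies in the convex hull of {X_1, ..., X_N}. -/

import Mathlib

open Module Set

lemma dirichlet_sim (s : ℕ) (x : Fin s → ℝ) (δ : ℝ) (hδ : 0 < δ) :
    ∃ (q : ℕ) (p : Fin s → ℤ), 0 < q ∧ ∀ j, |(q : ℝ) * x j - p j| < δ := by
  set M : ℕ := ⌈δ⁻¹⌉₊ + 1 with hM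
  have hM0 : 0 < M := Nat.succ_pos _
  have hMR : (0:ℝ) < M := by exact_mod_cast hM0
  have hMδ : (1 : ℝ) / M < δ := by
    rw [div_lt_iff₀ hMR]
    calc (1:ℝ) = δ * δ⁻¹ := by field_simp
    _ ≤ δ * ⌈δ⁻¹⌉₊ := by
      apply mul_le_mul_of_nonneg_left (Nat.le_ceil _) hδ.le
    _ < δ * M := by
      apply mul_lt_mul_of_pos_left _ hδ
      push_cast [hM]; linarith
  have hcell : ∀ (n : ℕ) (j : Fin s), (⌊Int.fract ((n : ℝ) * x j) * M⌋).toNat < M := by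
    intro n j
    have h1 : (0:ℝ) ≤ Int.fract ((n : ℝ) * x j) := Int.fract_nonneg _
    have h2 : Int.fract ((n : ℝ) * x j) < 1 := Int.fract_lt_one _
    have h3 : ⌊Int.fract ((n : ℝ) * x j) * M⌋ < (M : ℤ) := by
      apply Int.floor_lt.2
      push_cast
      nlinarith
    omega
  let F : Fin (M ^ s + 1) → (Fin s → Fin M) := fun n j =>
    ⟨(⌊Int.fract ((n : ℝ) * x j) * M⌋).toNat, hcell n j⟩
  have hcard : Fintype.card (Fin s → Fin M) < Fintype.card (Fin (M ^ s + 1)) := by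
    simp [Fintype.card_fun]
  obtain ⟨a, b, hab, hFab⟩ := Fintype.exists_ne_map_eq_of_card_lt F hcard
  -- wlog a < b
  wlog hlt : (a : ℕ) < (b : ℕ) generalizing a b
  · have hne : (a:ℕ) ≠ (b:ℕ) := fun h => hab (Fin.ext h)
    exact this b a hab.symm hFab.symm (by omega)
  refine ⟨(b : ℕ) - a, fun j => ⌊((b:ℕ) : ℝ) * x j⌋ - ⌊((a:ℕ) : ℝ) * x j⌋, by omega, ?_⟩
  intro j
  have hfloor : ⌊Int.fract (((a:ℕ) : ℝ) * x j) * M⌋ = ⌊Int.fract (((b:ℕ) : ℝ) * x j) * M⌋ := by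
    have := congrFun hFab j
    have h1 := congrArg Fin.val this
    simp only [F] at h1
    have hA : (0:ℤ) ≤ ⌊Int.fract (((a:ℕ) : ℝ) * x j) * M⌋ :=
      Int.floor_nonneg.2 (mul_nonneg (Int.fract_nonneg _) hMR.le)
    have hB : (0:ℤ) ≤ ⌊Int.fract (((b:ℕ) : ℝ) * x j) * M⌋ :=
      Int.floor_nonneg.2 (mul_nonneg (Int.fract_nonneg _) hMR.le)
    omega
  have habs : |Int.fract (((b:ℕ) : ℝ) * x j) * M - Int.fract (((a:ℕ) : ℝ) * x j) * M| < 1 :=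
    Int.abs_sub_lt_one_of_floor_eq_floor hfloor.symm
  have hq : (((b:ℕ) - (a:ℕ) : ℕ) : ℝ) = ((b:ℕ) : ℝ) - ((a:ℕ) : ℝ) := by
    push_cast [Nat.cast_sub hlt.le]; ring
  have hkey : (((b:ℕ) - (a:ℕ) : ℕ) : ℝ) * x j - ((⌊((b:ℕ) : ℝ) * x j⌋ - ⌊((a:ℕ) : ℝ) * x j⌋ : ℤ) : ℝ)
      = Int.fract (((b:ℕ) : ℝ) * x j) - Int.fract (((a:ℕ) : ℝ) * x j) := by
    rw [hq]
    unfold Int.fract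
    push_cast
    ring
  rw [hkey]
  have : |Int.fract (((b:ℕ) : ℝ) * x j) - Int.fract (((a:ℕ) : ℝ) * x j)| * M < 1 := by
    have h5 := habs
    rw [← sub_mul, abs_mul, abs_of_pos hMR] at h5
    exact h5
  have h4 : |Int.fract (((b:ℕ) : ℝ) * x j) - Int.fract (((a:ℕ) : ℝ) * x j)| < 1 / M :=
    (lt_div_iff₀ hMR).2 this
  linarith

open Module Set Filter
open scoped RealInnerProductSpace

lemma zero_mem_convexHull_of_approx_neg :
    ∀ (n : ℕ) (V : Type) [NormedAddCommGroup V] [InnerProductSpace ℝ V]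
      [FiniteDimensional ℝ V] (E : Set V),
      Module.finrank ℝ V ≤ n → E.Nonempty →
      (∀ e ∈ E, ∀ δ : ℝ, 0 < δ → ∃ e' ∈ E, ‖e + e'‖ < δ) →
      (0 : V) ∈ convexHull ℝ E := by
  intro n
  induction n with
  | zero =>
    intro V _ _ _ E hrank hne hP
    have h0 : Module.finrank ℝ V = 0 := Nat.le_zero.mp hrank
    have hsub : Subsingleton V := Module.finrank_zero_iff.mp h0
    obtain ⟨e, he⟩ := hne
    have he0 : e = 0 := Subsingleton.elim e 0
    exact subset_convexHull ℝ E (he0 ▸ he)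
  | succ n ih =>
    intro V _ _ _ E hrank hne hP
    by_contra h0
    set C := convexHull ℝ E with hC
    have hCconv : Convex ℝ C := convex_convexHull ℝ E
    set K := closure C with hK
    have hKconv : Convex ℝ K := hCconv.closure
    have hKclosed : IsClosed K := isClosed_closure
    have hEK : E ⊆ K := (subset_convexHull ℝ E).trans subset_closure
    have h0K : (0 : V) ∈ K := by
      rw [hK, Metric.mem_closure_iff]
      intro ε hε
      obtain ⟨e, he⟩ := hne
      obtain ⟨e', he', hee'⟩ := hP e he ε hε
      refine ⟨(1/2 : ℝ) • e + (1/2 : ℝ) • e', ?_, ?_⟩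
      · exact hCconv (subset_convexHull ℝ E he) (subset_convexHull ℝ E he')
          (by norm_num) (by norm_num) (by norm_num)
      · have hxy : (0:V) - ((1/2:ℝ) • e + (1/2:ℝ) • e') = -((1/2:ℝ) • (e + e')) := by module
        rw [dist_eq_norm, hxy, norm_neg, norm_smul]
        have h1 : ‖e + e'‖ ≥ 0 := norm_nonneg _
        have h2 : ‖(1/2 : ℝ)‖ = 1/2 := by norm_num
        rw [h2]
        linarith
    have h0notint : (0 : V) ∉ interior K := by
      intro hint
      have hKaff : affineSpan ℝ K = ⊤ :=
        (hKconv.interior_nonempty_iff_affineSpan_eq_top).mp ⟨0, hint⟩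
      have hCaff : affineSpan ℝ C = ⊤ := by
        have hKsub : K ⊆ (affineSpan ℝ C : Set V) :=
          closure_minimal (subset_affineSpan ℝ C) (affineSpan ℝ C).closed_of_finiteDimensional
        have : affineSpan ℝ K ≤ affineSpan ℝ C := affineSpan_le.mpr hKsub
        exact top_le_iff.mp (hKaff ▸ this)
      obtain ⟨y, hy⟩ := (hCconv.interior_nonempty_iff_affineSpan_eq_top).mpr hCaff
      obtain ⟨r, hr, hball⟩ := Metric.isOpen_iff.mp isOpen_interior 0 hint
      set t : ℝ := r / (2 * (‖y‖ + 1)) with ht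
      have hypos : (0:ℝ) < ‖y‖ + 1 := by positivity
      have htpos : 0 < t := by positivity
      have hzK : -(t • y) ∈ K := by
        apply interior_subset
        apply hball
        rw [Metric.mem_ball, dist_zero_right, norm_neg, norm_smul, Real.norm_eq_abs,
          abs_of_pos htpos]
        calc t * ‖y‖ ≤ t * (‖y‖ + 1) := by nlinarith
        _ = r / 2 := by rw [ht]; field_simp
        _ < r := by linarith
      have hcombo : (t/(1+t)) • y + (1/(1+t)) • (-(t • y)) = (0:V) := by
        rw [smul_neg, smul_smul, show 1/(1+t)*t = t/(1+t) by ring, add_neg_cancel]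
      have h0int : (0:V) ∈ interior C := by
        rw [← hcombo]
        exact hCconv.combo_interior_closure_mem_interior hy hzK
          (by positivity) (by positivity) (by field_simp; ring)
      exact h0 (interior_subset h0int)
    -- points outside K converging to 0
    have h0cl : (0:V) ∈ closure Kᶜ := by
      rw [closure_compl]
      exact h0notint
    have hz : ∀ k : ℕ, ∃ z : V, z ∉ K ∧ ‖z‖ < 1/(k+1) := by
      intro k
      rw [Metric.mem_closure_iff] at h0cl
      obtain ⟨w, hw1, hw2⟩ := h0cl (1/(k+1)) (by positivity)
      refine ⟨w, hw1, ?_⟩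
      rwa [dist_comm, dist_zero_right] at hw2
    choose z hzK hznorm using hz
    -- separating unit vectors
    have hsep : ∀ k : ℕ, ∃ c : V, ‖c‖ = 1 ∧ ∀ v ∈ K, ⟪c, v⟫ < 1/(k+1) := by
      intro k
      obtain ⟨f, u, hfu, hfz⟩ := geometric_hahn_banach_closed_point hKconv hKclosed (hzK k)
      set c0 := (InnerProductSpace.toDual ℝ V).symm f with hc0def
      have hc0 : ∀ v, ⟪c0, v⟫ = f v := fun v => InnerProductSpace.toDual_symm_apply
      have hc0ne : c0 ≠ 0 := by
        intro hzero
        have h1 : f 0 < u := hfu 0 h0K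
        have h2 : f (z k) = 0 := by rw [← hc0, hzero, inner_zero_left]
        have h3 : f 0 = 0 := map_zero f
        rw [h3] at h1
        rw [h2] at hfz
        linarith
      have hunit : ‖‖c0‖⁻¹ • c0‖ = 1 := by
        rw [norm_smul, norm_inv, norm_norm, inv_mul_cancel₀ (norm_ne_zero_iff.mpr hc0ne)]
      refine ⟨‖c0‖⁻¹ • c0, hunit, ?_⟩
      intro v hv
      have hpos : 0 < ‖c0‖⁻¹ := by
        rw [inv_pos, norm_pos_iff]
        exact hc0ne
      have h1 : ⟪c0, v⟫ < ⟪c0, z k⟫ := by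
        rw [hc0, hc0]; exact lt_trans (hfu v hv) hfz
      have h2 : ⟪‖c0‖⁻¹ • c0, v⟫ < ⟪‖c0‖⁻¹ • c0, z k⟫ := by
        rw [real_inner_smul_left, real_inner_smul_left]
        exact mul_lt_mul_of_pos_left h1 hpos
      calc ⟪‖c0‖⁻¹ • c0, v⟫ < ⟪‖c0‖⁻¹ • c0, z k⟫ := h2
        _ ≤ ‖‖c0‖⁻¹ • c0‖ * ‖z k‖ := real_inner_le_norm _ _
        _ = ‖z k‖ := by rw [hunit, one_mul]
        _ < 1/(k+1) := hznorm k
    choose c hc1 hc2 using hsep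
    obtain ⟨cl, hclmem, φ, hφ, hconv⟩ :=
      (isCompact_sphere (0:V) 1).tendsto_subseq (fun k => by
        simpa [mem_sphere_zero_iff_norm] using hc1 k)
    have hcl1 : ‖cl‖ = 1 := mem_sphere_zero_iff_norm.mp hclmem
    have hneg : ∀ v ∈ K, ⟪cl, v⟫ ≤ 0 := by
      intro v hv
      have h1 : Tendsto (fun k => ⟪c (φ k), v⟫) atTop (nhds ⟪cl, v⟫) :=
        hconv.inner tendsto_const_nhds
      have h2 : Tendsto (fun k : ℕ => 1/((φ k : ℝ)+1)) atTop (nhds 0) := by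
        apply squeeze_zero (fun k => by positivity) (fun k => ?_)
          (tendsto_one_div_add_atTop_nhds_zero_nat)
        have hk : (k : ℝ) ≤ (φ k : ℝ) := by exact_mod_cast hφ.le_apply
        exact one_div_le_one_div_of_le (by positivity) (by linarith)
      exact le_of_tendsto_of_tendsto' h1 h2 (fun k => (hc2 (φ k) v hv).le)
    have hEzero : ∀ e ∈ E, ⟪cl, e⟫ = 0 := by
      intro e he
      have hle : ⟪cl, e⟫ ≤ 0 := hneg e (hEK he)
      have hge : ∀ δ : ℝ, 0 < δ → -δ ≤ ⟪cl, e⟫ := by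
        intro δ hδ
        obtain ⟨e', he', hee'⟩ := hP e he δ hδ
        have h1 : ⟪cl, e'⟫ ≤ 0 := hneg e' (hEK he')
        have h2 : |⟪cl, e + e'⟫| ≤ ‖cl‖ * ‖e + e'‖ := abs_real_inner_le_norm _ _
        rw [hcl1, one_mul] at h2
        have h3 : ⟪cl, e + e'⟫ = ⟪cl, e⟫ + ⟪cl, e'⟫ := inner_add_right _ _ _
        have h4 : -‖e + e'‖ ≤ ⟪cl, e + e'⟫ := neg_le_of_abs_le h2
        linarith
      by_contra hne0
      have hlt : ⟪cl, e⟫ < 0 := lt_of_le_of_ne hle hne0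
      have := hge (-⟪cl, e⟫/2) (by linarith)
      linarith
    have hclne : cl ≠ 0 := by
      intro h
      rw [h, norm_zero] at hcl1
      norm_num at hcl1
    set W := (ℝ ∙ cl)ᗮ with hW
    have hEW : E ⊆ (W : Set V) := fun e he =>
      Submodule.mem_orthogonal_singleton_iff_inner_right.mpr (hEzero e he)
    have hrankW : Module.finrank ℝ W ≤ n := by
      have h1 : Module.finrank ℝ (ℝ ∙ cl) = 1 := finrank_span_singleton hclne
      have h2 : Module.finrank ℝ (ℝ ∙ cl) + Module.finrank ℝ W = Module.finrank ℝ V :=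
        Submodule.finrank_add_finrank_orthogonal (K := ℝ ∙ cl)
      omega
    set E' : Set W := Subtype.val ⁻¹' E with hE'
    have hne' : E'.Nonempty := by
      obtain ⟨e, he⟩ := hne
      exact ⟨⟨e, hEW he⟩, he⟩
    have hP' : ∀ e ∈ E', ∀ δ : ℝ, 0 < δ → ∃ e' ∈ E', ‖e + e'‖ < δ := by
      rintro ⟨e, heW⟩ he δ hδ
      obtain ⟨e', he', hee'⟩ := hP e he δ hδ
      refine ⟨⟨e', hEW he'⟩, he', ?_⟩
      show ‖(⟨e, heW⟩ + ⟨e', hEW he'⟩ : W)‖ < δ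
      have hcoe : ‖(⟨e, heW⟩ + ⟨e', hEW he'⟩ : W)‖ = ‖e + e'‖ := rfl
      rw [hcoe]
      exact hee'
    have h0' : (0 : W) ∈ convexHull ℝ E' := ih W E' hrankW hne' hP'
    have himg : (W.subtype) '' (convexHull ℝ E') = convexHull ℝ ((W.subtype) '' E') :=
      LinearMap.image_convexHull _ _
    have h0V : (0:V) ∈ convexHull ℝ ((W.subtype) '' E') := by
      rw [← himg]
      exact ⟨0, h0', map_zero _⟩
    have hsubE : (W.subtype) '' E' ⊆ E := by
      rintro _ ⟨w, hw, rfl⟩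
      exact hw
    exact h0 (convexHull_mono hsubE h0V)

open Module Set Filter
open scoped RealInnerProductSpace

/-- Fact 1.F.2 (2): any real vector lies in the convex hull of finitely many
good rational approximations of itself. -/
theorem convex_hull_of_rational_approximations (s : ℕ) (x : Fin s → ℝ)
    (η₀ : ℝ) (hη₀ : 0 < η₀) :
    ∃ (N : ℕ) (q : Fin N → ℕ) (p : Fin N → Fin s → ℤ),
      (∀ i, 0 < q i) ∧
      (∀ i j, |(q i : ℝ) * x j - p i j| < η₀) ∧
      x ∈ convexHull ℝ (Set.range fun i : Fin N => fun j : Fin s => (p i j : ℝ) / (q i : ℝ)) := by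
  classical
  set V := EuclideanSpace ℝ (Fin s) with hV
  set E : Set V := {e : V | ∃ (q : ℕ) (p : Fin s → ℤ), 0 < q ∧
    (∀ j, e j = (q : ℝ) * x j - p j) ∧ (∀ j, |e j| < η₀)} with hE
  -- E is nonempty
  have hne : E.Nonempty := by
    obtain ⟨q, p, hq, hd⟩ := dirichlet_sim s x η₀ hη₀
    refine ⟨(WithLp.equiv 2 (Fin s → ℝ)).symm (fun j => (q : ℝ) * x j - p j), q, p, hq,
      fun j => rfl, fun j => hd j⟩
  -- E satisfies the approximate-negation property
  have hP : ∀ e ∈ E, ∀ δ : ℝ, 0 < δ → ∃ e' ∈ E, ‖e + e'‖ < δ := by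
    rintro e ⟨q, p, hq, hrep, hb⟩ δ hδ
    obtain ⟨A, hA0, hAη, hAb⟩ : ∃ A : ℝ, 0 ≤ A ∧ A < η₀ ∧ ∀ j, |e j| ≤ A := by
      rcases isEmpty_or_nonempty (Fin s) with h | h
      · exact ⟨η₀/2, by positivity, by linarith, fun j => (h.false j).elim⟩
      · obtain ⟨j₀, -, hj₀⟩ := Finset.exists_max_image Finset.univ (fun j => |e j|)
          ⟨Classical.arbitrary _, Finset.mem_univ _⟩
        exact ⟨|e j₀|, abs_nonneg _, hb j₀, fun j => hj₀ j (Finset.mem_univ _)⟩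
    set ε : ℝ := min δ (η₀ - A) with hεdef
    have hε : 0 < ε := lt_min hδ (by linarith)
    have hεδ : ε ≤ δ := min_le_left _ _
    have hεA : ε ≤ η₀ - A := min_le_right _ _
    obtain ⟨q₀, p₀, hq₀, hd⟩ := dirichlet_sim s x (ε / ((q+1)*(s+1))) (by positivity)
    have hq'big : q < (q+1) * q₀ := by
      calc q < q + 1 := Nat.lt_succ_self q
      _ ≤ (q+1) * q₀ := Nat.le_mul_of_pos_right _ hq₀
    set q' : ℕ := (q+1) * q₀ - q with hq'def
    have hq' : 0 < q' := by omega
    set p' : Fin s → ℤ := fun j => ((q:ℤ)+1) * p₀ j - p j with hp'def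
    set e' : V := (WithLp.equiv 2 (Fin s → ℝ)).symm (fun j => (q' : ℝ) * x j - p' j) with he'def
    have he'rep : ∀ j, e' j = (q' : ℝ) * x j - p' j := fun j => rfl
    have hcast : (q' : ℝ) = ((q:ℝ)+1) * q₀ - q := by
      rw [hq'def]
      push_cast [Nat.cast_sub hq'big.le]
      ring
    have hsumco : ∀ j, e' j + e j = ((q:ℝ)+1) * ((q₀:ℝ) * x j - p₀ j) := by
      intro j
      rw [he'rep j, hrep j, hcast, hp'def]
      push_cast
      ring
    have habs : ∀ j, |e' j + e j| < ε / (s+1) := by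
      intro j
      rw [hsumco j, abs_mul, abs_of_pos (by positivity : (0:ℝ) < (q:ℝ)+1)]
      calc ((q:ℝ)+1) * |(q₀:ℝ) * x j - p₀ j| < ((q:ℝ)+1) * (ε / ((q+1)*(s+1))) := by
            apply mul_lt_mul_of_pos_left (hd j) (by positivity)
      _ = ε / (s+1) := by
            field_simp
    have hεs : ε / (s+1) ≤ ε := by
      apply div_le_self hε.le
      have : (0:ℝ) ≤ (s:ℝ) := Nat.cast_nonneg s
      linarith
    have he'E : e' ∈ E := by
      refine ⟨q', p', hq', he'rep, fun j => ?_⟩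
      have h1 : |(e' j + e j) - e j| ≤ |e' j + e j| + |e j| := abs_sub _ _
      rw [show (e' j + e j) - e j = e' j from by ring] at h1
      calc |e' j| ≤ |e j| + |e' j + e j| := by linarith
      _ < A + ε / (s+1) := by have := habs j; have := hAb j; linarith
      _ ≤ A + (η₀ - A) := by linarith
      _ = η₀ := by ring
    refine ⟨e', he'E, ?_⟩
    have hnorm : ‖e + e'‖ = Real.sqrt (∑ i, ‖(e + e') i‖ ^ 2) := EuclideanSpace.norm_eq _
    rw [hnorm]
    have hco : ∀ i, ‖(e + e') i‖ ≤ ε / (s+1) := by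
      intro i
      have : (e + e') i = e' i + e i := by
        rw [PiLp.add_apply]
        ring
      rw [this, Real.norm_eq_abs]
      exact (habs i).le
    have h1 : ∑ i, ‖(e + e') i‖ ^ 2 ≤ (s : ℝ) * (ε/(s+1))^2 := by
      calc ∑ i, ‖(e + e') i‖ ^ 2 ≤ ∑ _i : Fin s, (ε/(s+1))^2 :=
            Finset.sum_le_sum fun i _ => pow_le_pow_left₀ (norm_nonneg _) (hco i) 2
      _ = (s : ℝ) * (ε/(s+1))^2 := by
            rw [Finset.sum_const, Finset.card_univ, Fintype.card_fin, nsmul_eq_mul]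
    have h2 : (s : ℝ) * (ε/(s+1))^2 < ε^2 := by
      have hs0 : (0:ℝ) ≤ (s:ℝ) := Nat.cast_nonneg s
      have hq2 : (0:ℝ) < ((s:ℝ)+1)^2 := by positivity
      rw [div_pow, show (s:ℝ) * (ε^2/(((s:ℝ)+1)^2)) = (s:ℝ)*ε^2/(((s:ℝ)+1)^2) from by ring,
        div_lt_iff₀ hq2]
      nlinarith [mul_pos (pow_pos hε 2) (show (0:ℝ) < (s:ℝ)^2 + (s:ℝ) + 1 from by positivity)]
    calc Real.sqrt (∑ i, ‖(e + e') i‖ ^ 2) ≤ Real.sqrt ((s : ℝ) * (ε/(s+1))^2) :=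
          Real.sqrt_le_sqrt h1
    _ < Real.sqrt (ε^2) := Real.sqrt_lt_sqrt (by positivity) h2
    _ = ε := Real.sqrt_sq hε.le
    _ ≤ δ := hεδ
  -- apply the key lemma
  have hrank : Module.finrank ℝ V ≤ s := le_of_eq (finrank_euclideanSpace_fin)
  have h0 : (0 : V) ∈ convexHull ℝ E :=
    zero_mem_convexHull_of_approx_neg s V E hrank hne hP
  -- transport to the plain pi type
  set Ep : Set (Fin s → ℝ) := {y : Fin s → ℝ | ∃ (q : ℕ) (p : Fin s → ℤ), 0 < q ∧
    (∀ j, y j = (q : ℝ) * x j - p j) ∧ (∀ j, |y j| < η₀)} with hEp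
  have h0' : (0 : Fin s → ℝ) ∈ convexHull ℝ Ep := by
    have hEq : Ep = (WithLp.linearEquiv 2 ℝ (Fin s → ℝ)).toLinearMap '' E := by
      ext y; constructor
      · rintro ⟨q, p, hq, h1, h2⟩; exact ⟨WithLp.toLp 2 y, ⟨q, p, hq, h1, h2⟩, rfl⟩
      · rintro ⟨e, ⟨q, p, hq, h1, h2⟩, rfl⟩; exact ⟨q, p, hq, h1, h2⟩
    rw [hEq, ← LinearMap.image_convexHull]
    exact ⟨0, h0, map_zero _⟩
  rw [convexHull_eq] at h0'
  obtain ⟨ι, t, w, zf, hw₀, hw₁, hzE, hcm⟩ := h0'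
  have hsum : ∑ i ∈ t, w i • zf i = 0 := by
    rwa [Finset.centerMass, hw₁, inv_one, one_smul] at hcm
  have hsumj : ∀ j, ∑ i ∈ t, w i * zf i j = 0 := by
    intro j
    have h := congrFun hsum j
    simpa [Finset.sum_apply] using h
  choose Q P hQ hrep hbnd using fun i : {i // i ∈ t} => hzE i i.2
  set N := t.card with hN
  set et : {i // i ∈ t} ≃ Fin N := t.equivFin with het
  refine ⟨N, fun i => Q (et.symm i), fun i => P (et.symm i), fun i => hQ _, ?_, ?_⟩
  · intro i j
    have h := hrep (et.symm i) j
    rw [← h]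
    exact hbnd _ j
  · set W : Fin N → ℝ := fun i => w (et.symm i) * Q (et.symm i) with hW
    set Z : Fin N → (Fin s → ℝ) :=
      fun i => fun j => (P (et.symm i) j : ℝ) / (Q (et.symm i) : ℝ) with hZ
    have hW₀ : ∀ i ∈ Finset.univ, 0 ≤ W i := by
      intro i _
      exact mul_nonneg (hw₀ _ (et.symm i).2) (Nat.cast_nonneg _)
    have hsum_sub : ∀ f : {i // i ∈ t} → ℝ,
        ∑ i : Fin N, f (et.symm i) = ∑ i : {i // i ∈ t}, f i :=
      fun f => Equiv.sum_comp et.symm f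
    have hWsum : ∑ i : Fin N, W i = ∑ i : {i // i ∈ t}, w i * Q i :=
      hsum_sub (fun i => w i * Q i)
    have hWpos : 0 < ∑ i ∈ Finset.univ, W i := by
      rw [hWsum]
      have h1 : (1:ℝ) ≤ ∑ i : {i // i ∈ t}, w i * Q i := by
        calc (1:ℝ) = ∑ i ∈ t, w i := hw₁.symm
        _ = ∑ i : {i // i ∈ t}, w (i : ι) := (Finset.sum_coe_sort t w).symm
        _ ≤ ∑ i : {i // i ∈ t}, w i * Q i := by
              apply Finset.sum_le_sum
              intro i _
              have hq1 : (1:ℝ) ≤ Q i := by exact_mod_cast hQ i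
              have hw0 : 0 ≤ w i := hw₀ i i.2
              nlinarith
      linarith
    have hZmem : ∀ i ∈ Finset.univ, Z i ∈
        Set.range fun i : Fin N => fun j : Fin s => ((P (et.symm i) j : ℝ)) / ((Q (et.symm i) : ℝ)) := by
      intro i _
      exact ⟨i, rfl⟩
    have hkey : ∑ i : Fin N, W i • Z i = (∑ i : Fin N, W i) • x := by
      funext j
      rw [Finset.sum_apply, Pi.smul_apply, smul_eq_mul]
      have hterm : ∀ i : Fin N, (W i • Z i) j = w (et.symm i) * (P (et.symm i) j : ℝ) := by
        intro i
        rw [Pi.smul_apply, smul_eq_mul, hW, hZ]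
        have hQne : ((Q (et.symm i) : ℝ)) ≠ 0 := by
          exact_mod_cast (hQ (et.symm i)).ne'
        field_simp
      rw [Finset.sum_congr rfl fun i _ => hterm i]
      have hPx : ∀ i : {i // i ∈ t}, (P i j : ℝ) = (Q i : ℝ) * x j - zf i j := by
        intro i
        have := hrep i j
        linarith
      calc ∑ i : Fin N, w (et.symm i) * (P (et.symm i) j : ℝ)
          = ∑ i : {i // i ∈ t}, w i * (P i j : ℝ) :=
            hsum_sub (fun i => w (i : ι) * (P i j : ℝ))
      _ = ∑ i : {i // i ∈ t}, (w i * Q i * x j - w i * zf i j) := by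
            apply Finset.sum_congr rfl
            intro i _
            rw [hPx i]
            ring
      _ = (∑ i : {i // i ∈ t}, w i * Q i) * x j - ∑ i : {i // i ∈ t}, w (i : ι) * zf i j := by
            rw [Finset.sum_sub_distrib, Finset.sum_mul]
      _ = (∑ i : {i // i ∈ t}, w i * Q i) * x j - 0 := by
            rw [Finset.sum_coe_sort t (fun i => w i * zf i j), hsumj j]
      _ = (∑ i : Fin N, W i) * x j := by rw [hWsum]; ring
    have hcM : Finset.univ.centerMass W Z = x := by
      rw [Finset.centerMass, hkey, smul_smul, inv_mul_cancel₀ hWpos.ne', one_smul]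
    have := Finset.centerMass_mem_convexHull Finset.univ hW₀ hWpos hZmem
    rwa [hcM] at this
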